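/- Let (C, R, 𝓡) be a big-step semantics and Π = (Π_ι)_{ι∈I} an indexed predicate on configurations satisfying conditions S1 (local preservation) and S4 (progress-may). If c ∈ Π, then there is a (finite or infinite) trace t such that ⊢_{𝓡^tr} c ⇒ t in the trace semantics 𝓡^tr. -/

import Mathlib

namespace BigStepMeta

universe u

/-- A judgment `c ⇒ r`: a configuration together with a result. -/
structure Judg (C : Type u) where
  conf : C
  res  : C

/-- A big-step rule: a conclusion configuration plus a nonempty finite list of premises.
The last premise is the continuation; the conclusion judgment is `concl ⇒ (last premise).res`. -/
structure Rule (C : Type u) where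
  concl : C
  premises : List (Judg C)
  ne : premises ≠ []

/-- The last premise (continuation) of a rule. -/
def Rule.lastJ {C : Type u} (ρ : Rule C) : Judg C := ρ.premises.getLast ρ.ne

/-- A big-step semantics `(C, R, 𝓡)`: configurations `C`, results `R ⊆ C`, rules `𝓡`. -/
structure BigStep (C : Type u) where
  R : Set C
  Rules : Set (Rule C)
  concl_not_res : ∀ ρ ∈ Rules, ρ.concl ∉ R
  prem_res : ∀ ρ ∈ Rules, ∀ j ∈ ρ.premises, j.res ∈ R

variable {C : Type u}

/-- Condition BP: the number of premises of rules is bounded. -/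
def BigStep.BP (S : BigStep C) : Prop :=
  ∃ b : ℕ, ∀ ρ ∈ S.Rules, ρ.premises.length ≤ b

/-- Inductive derivability `⊢_𝓡 c ⇒ r`: there is a finite proof tree.
For each result `r ∈ R` there is an implicit axiom `r ⇒ r`. -/
inductive Derives (S : BigStep C) : C → C → Prop
  | ax {r : C} : r ∈ S.R → Derives S r r
  | rule {ρ : Rule C} : ρ ∈ S.Rules →
      (∀ j ∈ ρ.premises, Derives S j.conf j.res) →
      Derives S ρ.concl ρ.lastJ.res

/-! ## Traces -/

/-- A finite or infinite trace of configurations. -/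
inductive Trace (C : Type u) where
  | fin : List C → Trace C
  | inf : (ℕ → C) → Trace C

/-- Concatenation of a finite list with an infinite sequence. -/
def appendInf (l : List C) (f : ℕ → C) : ℕ → C :=
  fun n => if h : n < l.length then l.get ⟨n, h⟩ else f (n - l.length)

/-- The finite trace `t_k · R(j_k)` associated to a premise and a chosen finite trace. -/
def finPart (p : Judg C × List C) : List C := p.2 ++ [p.1.res]

/-- The rule instances of the trace semantics `𝓡^tr`: a conclusion `c ⇒ t`
together with its list of premises. -/
inductive TrRule (S : BigStep C) : C → Trace C → List (C × Trace C) → Prop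
  | ax {r : C} : r ∈ S.R → TrRule S r (.fin [r]) []
  | intro {ρ : Rule C} {ts : List (List C)} :
      ρ ∈ S.Rules → ts.length = ρ.premises.length →
      TrRule S ρ.concl
        (.fin (ρ.concl :: ((ρ.premises.zip ts).map finPart).flatten))
        ((ρ.premises.zip ts).map (fun p => (p.1.conf, Trace.fin (finPart p))))
  | div {ρ : Rule C} {pre rest : List (Judg C)} {j : Judg C} {ts : List (List C)} {f : ℕ → C} :
      ρ ∈ S.Rules → ρ.premises = pre ++ j :: rest →
      ts.length = pre.length →
      TrRule S ρ.concl
        (.inf (appendInf (ρ.concl :: ((pre.zip ts).map finPart).flatten) f))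
        (((pre.zip ts).map (fun p => (p.1.conf, Trace.fin (finPart p)))) ++
          [(j.conf, Trace.inf f)])

/-- `⊢_{𝓡^tr} c ⇒ t` by a finite derivation (inductive interpretation of `𝓡^tr`). -/
inductive TrDerivesFin (S : BigStep C) : C → Trace C → Prop
  | step {c : C} {t : Trace C} {prems : List (C × Trace C)} :
      TrRule S c t prems →
      (∀ p ∈ prems, TrDerivesFin S p.1 p.2) →
      TrDerivesFin S c t

/-- `⊢_{𝓡^tr} c ⇒ t`: coinductive interpretation of `𝓡^tr`, i.e. existence of a possibly
infinite proof tree, expressed as membership in some backward-closed (consistent) relation. -/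
def TrDerives (S : BigStep C) (c : C) (t : Trace C) : Prop :=
  ∃ X : C → Trace C → Prop,
    (∀ c' t', X c' t' → ∃ prems, TrRule S c' t' prems ∧ ∀ p ∈ prems, X p.1 p.2) ∧
    X c t

/-! ## Wrong -/

/-- There is a rule with conclusion configuration `c`, first premises `pre`, whose next
premise has configuration `c'` and result `r` (i.e. a rule `ρ' ∼ᵢ ρ` with `R(ρ', i) = r`). -/
def HasContinuation (S : BigStep C) (c : C) (pre : List (Judg C)) (c' r : C) : Prop :=
  ∃ ρ' ∈ S.Rules, ∃ j' : Judg C, ∃ rest' : List (Judg C),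
    ρ'.premises = pre ++ j' :: rest' ∧ ρ'.concl = c ∧ j'.conf = c' ∧ j'.res = r

/-- Derivability in the wrong semantics `𝓡^wr`; `none` plays the role of `wrong`. -/
inductive DerivesW (S : BigStep C) : C → Option C → Prop
  | ax {r : C} : r ∈ S.R → DerivesW S r (some r)
  | rule {ρ : Rule C} : ρ ∈ S.Rules →
      (∀ j ∈ ρ.premises, DerivesW S j.conf (some j.res)) →
      DerivesW S ρ.concl (some ρ.lastJ.res)
  | wrong_intro {ρ : Rule C} {pre rest : List (Judg C)} {j : Judg C} {r : C} :
      ρ ∈ S.Rules → ρ.premises = pre ++ j :: rest → r ∈ S.R →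
      ¬ HasContinuation S ρ.concl pre j.conf r →
      (∀ j' ∈ pre, DerivesW S j'.conf (some j'.res)) →
      DerivesW S j.conf (some r) →
      DerivesW S ρ.concl none
  | wrong_ax {c : C} : c ∉ S.R → (¬ ∃ ρ ∈ S.Rules, ρ.concl = c) →
      DerivesW S c none
  | wrong_prop {ρ : Rule C} {pre rest : List (Judg C)} {j : Judg C} :
      ρ ∈ S.Rules → ρ.premises = pre ++ j :: rest →
      (∀ j' ∈ pre, DerivesW S j'.conf (some j'.res)) →
      DerivesW S j.conf none →
      DerivesW S ρ.concl none

/-! ## Indexed predicates and soundness conditions -/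

variable {I : Type u}

/-- `c ∈ Π`, i.e. `c ∈ Π_ι` for some index `ι`. -/
def InPred (P : I → Set C) (c : C) : Prop := ∃ i : I, c ∈ P i

/-- Condition S1 (local preservation). -/
def LocalPres (S : BigStep C) (P : I → Set C) : Prop :=
  ∀ ρ ∈ S.Rules, ∀ i : I, ρ.concl ∈ P i →
    ∃ f : ℕ → I, f (ρ.premises.length - 1) = i ∧
      ∀ (k : ℕ) (hk : k < ρ.premises.length),
        (∀ (h : ℕ) (hh : h < k), (ρ.premises.get ⟨h, hh.trans hk⟩).res ∈ P (f h)) →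
        (ρ.premises.get ⟨k, hk⟩).conf ∈ P (f k)

/-- Condition S2 (∃-progress). -/
def ExProgress (S : BigStep C) (P : I → Set C) : Prop :=
  ∀ c : C, InPred P c → c ∉ S.R → ∃ ρ ∈ S.Rules, ρ.concl = c

/-- Condition S3 (∀-progress). -/
def AllProgress (S : BigStep C) (P : I → Set C) : Prop :=
  ∀ ρ ∈ S.Rules, InPred P ρ.concl →
    ∀ (pre : List (Judg C)) (j : Judg C) (rest : List (Judg C)),
      ρ.premises = pre ++ j :: rest →
      (∀ j' ∈ pre, Derives S j'.conf j'.res) →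
      ∀ r ∈ S.R, Derives S j.conf r →
      HasContinuation S ρ.concl pre j.conf r

/-- Condition S4 (progress-may). -/
def ProgressMay (S : BigStep C) (P : I → Set C) : Prop :=
  ∀ c : C, InPred P c → c ∉ S.R →
    ∃ ρ ∈ S.Rules, ρ.concl = c ∧
      ∀ (pre : List (Judg C)) (j : Judg C) (rest : List (Judg C)),
        ρ.premises = pre ++ j :: rest →
        (∀ j' ∈ pre, Derives S j'.conf j'.res) →
        ¬ Derives S j.conf j.res →
        ¬ ∃ r : C, Derives S j.conf r

/-! ## Partial evaluation: the inference system `𝓡^?` -/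

/-- The rule instances of the partial-evaluation semantics `𝓡^?`; `none` plays the role
of the unknown result `?`. -/
inductive URule (S : BigStep C) : C → Option C → List (C × Option C) → Prop
  | ax {r : C} : r ∈ S.R → URule S r (some r) []
  | rule {ρ : Rule C} : ρ ∈ S.Rules →
      URule S ρ.concl (some ρ.lastJ.res) (ρ.premises.map (fun j => (j.conf, some j.res)))
  | unk_ax {c : C} : URule S c none []
  | unk {ρ : Rule C} {pre rest : List (Judg C)} {j : Judg C} {r : C} :
      ρ ∈ S.Rules → ρ.premises = pre ++ j :: rest → r ∈ S.R →
      URule S ρ.concl none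
        (pre.map (fun j' => (j'.conf, some j'.res)) ++ [(j.conf, some r)])
  | prop {ρ : Rule C} {pre rest : List (Judg C)} {j : Judg C} :
      ρ ∈ S.Rules → ρ.premises = pre ++ j :: rest →
      URule S ρ.concl none
        (pre.map (fun j' => (j'.conf, some j'.res)) ++ [(j.conf, none)])

/-! ## Possibly infinite trees as partial functions -/

/-- A (possibly infinite) tree labelled by judgments `c ⇒ u`, `u ∈ R ∪ {?}`, given as a
partial function on addresses (lists of positive naturals), with nonempty domain closed
under parents and left siblings. -/
structure PTree (C : Type u) where
  label : List ℕ+ → Option (C × Option C)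
  root_def : label [] ≠ none
  closed : ∀ (α : List ℕ+) (n : ℕ+), label (α ++ [n]) ≠ none → label α ≠ none
  siblings : ∀ (α : List ℕ+) (n k : ℕ+), k ≤ n →
    label (α ++ [n]) ≠ none → label (α ++ [k]) ≠ none

/-- `τ` is a proof tree in `𝓡^?`: at each node, the children are exactly the premises
of a rule of `𝓡^?` with the node's judgment as conclusion. -/
def PTree.IsProofTree (S : BigStep C) (τ : PTree C) : Prop :=
  ∀ (α : List ℕ+) (p : C × Option C), τ.label α = some p →
    ∃ prems : List (C × Option C), URule S p.1 p.2 prems ∧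
      ∀ n : ℕ+, τ.label (α ++ [n]) = prems[(n : ℕ) - 1]?

/-- The order `τ ⊑ τ'` on trees: larger domain, same configurations, and equal subtrees
at nodes whose result is already known (in `R`). -/
def PTree.LE (τ τ' : PTree C) : Prop :=
  ∀ (α : List ℕ+) (p : C × Option C), τ.label α = some p →
    ∃ p' : C × Option C, τ'.label α = some p' ∧ p.1 = p'.1 ∧
      (p.2 ≠ none → ∀ β : List ℕ+, τ.label (α ++ β) = τ'.label (α ++ β))

/-- A tree is finite if its domain is finite. -/
def PTree.Finite (τ : PTree C) : Prop := {α : List ℕ+ | τ.label α ≠ none}.Finite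

/-- A (typically infinite) proof tree is well-formed if at every level there is a node
labelled by an incomplete judgment, and subtrees rooted at complete judgments are finite. -/
def PTree.WellFormed (τ : PTree C) : Prop :=
  (∀ n : ℕ, ∃ (α : List ℕ+) (c : C), α.length = n ∧ τ.label α = some (c, none)) ∧
  (∀ (α : List ℕ+) (c r : C), τ.label α = some (c, some r) →
    {β : List ℕ+ | τ.label (α ++ β) ≠ none}.Finite)

/-! ## Finite proof trees and the reduction relation -/

/-- Finite trees labelled by judgments `c ⇒ u`, `u ∈ R ∪ {?}` (with `none` playing `?`). -/
inductive FTree (C : Type u) where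
  | node : C → Option C → List (FTree C) → FTree C

/-- The judgment at the root of a finite tree. -/
def FTree.judg : FTree C → C × Option C
  | .node c u _ => (c, u)

/-- `τ` is a finite proof tree in the partial-evaluation semantics `𝓡^?`. -/
inductive IsFPT (S : BigStep C) : FTree C → Prop
  | mk {c : C} {u : Option C} {l : List (FTree C)} :
      URule S c u (l.map FTree.judg) →
      (∀ τ ∈ l, IsFPT S τ) →
      IsFPT S (.node c u l)

/-- A finite proof tree is complete if all its judgments have results in `R`. -/
inductive FTree.Complete (S : BigStep C) : FTree C → Prop
  | mk {c : C} {r : C} {l : List (FTree C)} :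
      r ∈ S.R →
      (∀ τ ∈ l, FTree.Complete S τ) →
      FTree.Complete S (.node c (some r) l)

/-- The order `τ ⊑ τ'` on finite trees. -/
inductive FTreeLE : FTree C → FTree C → Prop
  | done {c r : C} {l : List (FTree C)} :
      FTreeLE (.node c (some r) l) (.node c (some r) l)
  | step {c : C} {u' : Option C} {l l₁ l₂ : List (FTree C)} :
      l.length = l₁.length →
      (∀ p ∈ l.zip l₁, FTreeLE p.1 p.2) →
      FTreeLE (.node c none l) (.node c u' (l₁ ++ l₂))

/-- The one-step reduction relation `⇝` on finite proof trees in `𝓡^?`. -/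
inductive Red (S : BigStep C) : FTree C → FTree C → Prop
  /-- The axiom `r ⇒ ?` (with `r ∈ R`) steps to the axiom `r ⇒ r`. -/
  | res {r : C} : r ∈ S.R → Red S (.node r none []) (.node r (some r) [])
  /-- The axiom `c ⇒ ?` steps, for a rule `ρ` with conclusion configuration `c`,
  to the tree applying `prop(ρ,1,?)` to the leaf `c' ⇒ ?`, `c'` the first premise
  configuration of `ρ`. -/
  | start {ρ : Rule C} {j : Judg C} {rest : List (Judg C)} :
      ρ ∈ S.Rules → ρ.premises = j :: rest →
      Red S (.node ρ.concl none []) (.node ρ.concl none [.node j.conf none []])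
  /-- A tree with root `c ⇒ ?` whose children are the first `i` premises of some
  `ρ' ∈ 𝓡` (with `#ρ' = i`, last premise result `r`) steps to the same tree with
  root `c ⇒ r`. -/
  | complete {ρ' : Rule C} {pre : List (Judg C)} {j' : Judg C} {l : List (FTree C)} :
      ρ' ∈ S.Rules → ρ'.premises = pre ++ [j'] →
      l.map FTree.judg = pre.map (fun j => (j.conf, some j.res)) ++ [(j'.conf, some j'.res)] →
      Red S (.node ρ'.concl none l) (.node ρ'.concl (some j'.res) l)
  /-- A tree with root `c ⇒ ?` whose children are the first `i` premises of some
  `ρ' ∈ 𝓡` having an `(i+1)`-th premise steps by adding the leaf for that premise's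
  configuration. -/
  | next {ρ' : Rule C} {pre rest : List (Judg C)} {j' j'' : Judg C} {l : List (FTree C)} :
      ρ' ∈ S.Rules → ρ'.premises = pre ++ j' :: j'' :: rest →
      l.map FTree.judg = pre.map (fun j => (j.conf, some j.res)) ++ [(j'.conf, some j'.res)] →
      Red S (.node ρ'.concl none l) (.node ρ'.concl none (l ++ [.node j''.conf none []]))
  /-- Propagation: a step of the last child is propagated. -/
  | inner {c : C} {l : List (FTree C)} {τ τ' : FTree C} :
      Red S τ τ' →
      Red S (.node c none (l ++ [τ])) (.node c none (l ++ [τ']))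


/-! ## Auxiliary lemmas for Statement 8 -/

/-- S1 implies preservation of the indexed predicate along derivations. -/
theorem aux_pres {I : Type u} {S : BigStep C} {P : I → Set C} (hS1 : LocalPres S P) :
    ∀ {c r : C}, Derives S c r → ∀ i : I, c ∈ P i → r ∈ P i := by
  intro c r h
  induction h with
  | ax hr => exact fun i hi => hi
  | @rule ρ hmem hprem ih =>
    intro i hi
    obtain ⟨f, hf, hstep⟩ := hS1 ρ hmem i hi
    have key : ∀ k, ∀ hk : k < ρ.premises.length,
        (ρ.premises.get ⟨k, hk⟩).res ∈ P (f k) := by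
      intro k
      induction k using Nat.strong_induction_on with
      | _ k ihk =>
        intro hk
        have hconf : (ρ.premises.get ⟨k, hk⟩).conf ∈ P (f k) :=
          hstep k hk (fun m hm => ihk m hm (hm.trans hk))
        exact ih _ (ρ.premises.get_mem _) (f k) hconf
    have hpos : 0 < ρ.premises.length := List.length_pos_iff.mpr ρ.ne
    have hlt : ρ.premises.length - 1 < ρ.premises.length := by omega
    have hres := key _ hlt
    rw [hf] at hres
    have hl : ρ.lastJ = ρ.premises.get ⟨ρ.premises.length - 1, hlt⟩ := by
      simp [Rule.lastJ, List.getLast_eq_getElem]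
    rw [hl]
    exact hres

/-- Choice of finite traces for a list of premises, packaged for the trace rules. -/
theorem aux_mkTs {S : BigStep C} (pre : List (Judg C))
    (g : ∀ j ∈ pre, ∃ l : List C, TrDerivesFin S j.conf (.fin (l ++ [j.res]))) :
    ∃ ts : List (List C), ts.length = pre.length ∧
      ∀ p ∈ (pre.zip ts).map (fun p => (p.1.conf, Trace.fin (finPart p))),
        TrDerivesFin S p.1 p.2 := by
  refine ⟨pre.attach.map (fun j => Classical.choose (g j.1 j.2)), by simp, ?_⟩
  intro p hp
  simp only [List.mem_map] at hp
  obtain ⟨q, hq, rfl⟩ := hp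
  rw [List.mem_iff_getElem] at hq
  obtain ⟨m, hm, rfl⟩ := hq
  have hm1 : m < pre.length := by
    simp only [List.length_zip, List.length_map, List.length_attach, lt_min_iff] at hm
    exact hm.1
  simp only [List.getElem_zip, List.getElem_map, List.getElem_attach, finPart]
  exact Classical.choose_spec (g pre[m] (pre.getElem_mem hm1))

/-- Each inductive derivation gives a finite trace derivation (ending in the result). -/
theorem aux_derives_trfin {S : BigStep C} :
    ∀ {c r : C}, Derives S c r → ∃ l : List C, TrDerivesFin S c (.fin (l ++ [r])) := by
  intro c r h
  induction h with
  | ax hr => exact ⟨[], TrDerivesFin.step (TrRule.ax hr) (by simp)⟩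
  | @rule ρ hmem hprem ih =>
    obtain ⟨ts, hlen, hts⟩ := aux_mkTs ρ.premises ih
    have hstep := TrDerivesFin.step (TrRule.intro hmem hlen) hts
    have hts_ne : ts ≠ [] := by
      intro h0
      rw [h0] at hlen
      exact ρ.ne (List.length_eq_zero_iff.mp hlen.symm)
    obtain ⟨l, hl⟩ : ∃ l, ρ.concl :: ((ρ.premises.zip ts).map finPart).flatten
        = l ++ [ρ.lastJ.res] := by
      have h1 : ρ.premises = ρ.premises.dropLast ++ [ρ.lastJ] :=
        (List.dropLast_append_getLast ρ.ne).symm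
      have h2 : ts = ts.dropLast ++ [ts.getLast hts_ne] :=
        (List.dropLast_append_getLast hts_ne).symm
      have hdl : ρ.premises.dropLast.length = ts.dropLast.length := by
        simp [hlen]
      refine ⟨ρ.concl :: (((ρ.premises.dropLast.zip ts.dropLast).map finPart).flatten
        ++ ts.getLast hts_ne), ?_⟩
      conv_lhs => rw [h1, h2]
      rw [List.zip_append hdl]
      simp [finPart]
    exact ⟨l, hl ▸ hstep⟩

/-- S1 and S4 give, at each configuration in `Π` without derivable result, a
divergence-propagation step of the trace semantics whose continuation is again
in `Π` without derivable result. -/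
theorem aux_div_step {I : Type u} {S : BigStep C} {P : I → Set C}
    (hS1 : LocalPres S P) (hS4 : ProgressMay S P) (c : C)
    (hc : InPred P c) (hnd : ¬ ∃ r, Derives S c r) :
    ∃ (pt : List C) (c' : C) (prems₀ : List (C × Trace C)),
      (∀ f : ℕ → C, TrRule S c (.inf (appendInf (c :: pt) f)) (prems₀ ++ [(c', .inf f)])) ∧
      (∀ p ∈ prems₀, TrDerivesFin S p.1 p.2) ∧
      InPred P c' ∧ ¬ ∃ r, Derives S c' r := by
  classical
  have hcR : c ∉ S.R := fun h => hnd ⟨c, Derives.ax h⟩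
  obtain ⟨ρ, hρ, hceq, H⟩ := hS4 c hc hcR
  subst hceq
  have hnall : ¬ ∀ j ∈ ρ.premises, Derives S j.conf j.res := by
    intro hall; exact hnd ⟨_, Derives.rule hρ hall⟩
  have hex : ∃ n, ∃ hn : n < ρ.premises.length,
      ¬ Derives S (ρ.premises[n]'hn).conf (ρ.premises[n]'hn).res := by
    by_contra h0
    push_neg at h0
    apply hnall
    intro j hj
    rw [List.mem_iff_getElem] at hj
    obtain ⟨n, hn, rfl⟩ := hj
    exact h0 n hn
  set k := Nat.find hex with hkdef
  obtain ⟨hklen, hknd⟩ := Nat.find_spec hex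
  have hmin : ∀ m, m < k → ∀ hm : m < ρ.premises.length,
      Derives S (ρ.premises[m]'hm).conf (ρ.premises[m]'hm).res := by
    intro m hm hmlen
    by_contra hD
    exact Nat.find_min hex hm ⟨hmlen, hD⟩
  have hdec : ρ.premises = ρ.premises.take k ++ (ρ.premises[k]'hklen) :: ρ.premises.drop (k+1) := by
    rw [← List.drop_eq_getElem_cons hklen, List.take_append_drop]
  have hpreD : ∀ j' ∈ ρ.premises.take k, Derives S j'.conf j'.res := by
    intro j' hj'
    rw [List.mem_iff_getElem] at hj'
    obtain ⟨m, hm, rfl⟩ := hj'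
    have hm' : m < k ∧ m < ρ.premises.length := by
      simpa [lt_min_iff] using hm
    rw [List.getElem_take]
    exact hmin m hm'.1 hm'.2
  have hnor : ¬ ∃ r, Derives S (ρ.premises[k]'hklen).conf r :=
    H _ _ _ hdec hpreD hknd
  obtain ⟨i, hi⟩ := hc
  obtain ⟨f, hf, hstep⟩ := hS1 ρ hρ i hi
  have hconf : ∀ m, m ≤ k → ∀ hm : m < ρ.premises.length,
      (ρ.premises[m]'hm).conf ∈ P (f m) := by
    intro m
    induction m using Nat.strong_induction_on with
    | _ m ihm =>
      intro hmk hm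
      exact hstep m hm (fun h hh =>
        aux_pres hS1 (hmin h (lt_of_lt_of_le hh hmk) (hh.trans hm)) (f h)
          (ihm h hh (le_of_lt (lt_of_lt_of_le hh hmk)) (hh.trans hm)))
  have hInj : InPred P (ρ.premises[k]'hklen).conf := ⟨f k, hconf k le_rfl hklen⟩
  obtain ⟨ts, hlen, hts⟩ := aux_mkTs (ρ.premises.take k)
    (fun j' hj' => aux_derives_trfin (hpreD j' hj'))
  exact ⟨(((ρ.premises.take k).zip ts).map finPart).flatten, (ρ.premises[k]'hklen).conf,
    ((ρ.premises.take k).zip ts).map (fun p => (p.1.conf, Trace.fin (finPart p))),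
    fun f0 => TrRule.div hρ hdec hlen, hts, hInj, hnor⟩

/-- The diverging trace built by iterating `aux_div_step`. -/
noncomputable def divT (pref : C → List C) (next : C → C) (hp : ∀ c, pref c ≠ [])
    (c : C) (n : ℕ) : C :=
  if h : n < (pref c).length then (pref c).get ⟨n, h⟩
  else divT pref next hp (next c) (n - (pref c).length)
termination_by n
decreasing_by
  simp only [not_lt] at h
  have := List.length_pos_iff.mpr (hp c)
  omega

theorem divT_eq (pref : C → List C) (next : C → C) (hp : ∀ c, pref c ≠ []) (c : C) :
    divT pref next hp c = appendInf (pref c) (divT pref next hp (next c)) := by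
  funext n
  rw [divT]
  simp only [appendInf]

/-- Theorem `sound-traces`, soundness-may w.r.t. the trace semantics:
if S1 and S4 hold and `c ∈ Π`, then there is a (finite or infinite) trace `t` with
`⊢_{𝓡^tr} c ⇒ t`. -/
theorem statement8 {C : Type u} {I : Type u} (S : BigStep C) (P : I → Set C)
    (hS1 : LocalPres S P) (hS4 : ProgressMay S P)
    (c : C) (hc : InPred P c) :
    ∃ t : Trace C, TrDerives S c t := by
  classical
  by_cases hder : ∃ r, Derives S c r
  · obtain ⟨r, hr⟩ := hder
    obtain ⟨l, hl⟩ := aux_derives_trfin hr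
    refine ⟨.fin (l ++ [r]), TrDerivesFin S, ?_, hl⟩
    intro c' t' h
    cases h with
    | step h1 h2 => exact ⟨_, h1, h2⟩
  · have key : ∀ c' : C, ∃ (pt : List C) (nx : C),
        (InPred P c' ∧ ¬ ∃ r, Derives S c' r) →
        (∃ prems₀ : List (C × Trace C),
          (∀ f : ℕ → C,
            TrRule S c' (.inf (appendInf (c' :: pt) f)) (prems₀ ++ [(nx, .inf f)])) ∧
          (∀ p ∈ prems₀, TrDerivesFin S p.1 p.2)) ∧
        (InPred P nx ∧ ¬ ∃ r, Derives S nx r) := by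
      intro c'
      by_cases h : InPred P c' ∧ ¬ ∃ r, Derives S c' r
      · obtain ⟨pt, nx, prems₀, h1, h2, h3, h4⟩ := aux_div_step hS1 hS4 c' h.1 h.2
        exact ⟨pt, nx, fun _ => ⟨⟨prems₀, h1, h2⟩, h3, h4⟩⟩
      · exact ⟨[], c', fun h' => absurd h' h⟩
    choose pt nx hkey using key
    have hne : ∀ c' : C, (fun c'' => c'' :: pt c'') c' ≠ [] := fun c' => by simp
    set g := divT (fun c'' => c'' :: pt c'') nx hne with hg
    refine ⟨.inf (g c),
      fun c' t' => TrDerivesFin S c' t' ∨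
        ((InPred P c' ∧ ¬ ∃ r, Derives S c' r) ∧ t' = .inf (g c')),
      ?_, Or.inr ⟨⟨hc, hder⟩, rfl⟩⟩
    rintro c' t' (h | ⟨hDc, rfl⟩)
    · cases h with
      | step h1 h2 => exact ⟨_, h1, fun p hp => Or.inl (h2 p hp)⟩
    · obtain ⟨⟨prems₀, h1, h2⟩, hDnx⟩ := hkey c' hDc
      refine ⟨prems₀ ++ [(nx c', .inf (g (nx c')))], ?_, ?_⟩
      · have he : g c' = appendInf (c' :: pt c') (g (nx c')) := by
          rw [hg]; exact divT_eq _ _ _ c'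
        rw [he]
        exact h1 (g (nx c'))
      · intro p hp
        rcases List.mem_append.mp hp with hp | hp
        · exact Or.inl (h2 p hp)
        · rw [List.mem_singleton] at hp
          subst hp
          exact Or.inr ⟨hDnx, rfl⟩

end BigStepMeta
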